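/- For every a>0, T>0 and real p≥1, ∫₀^T r^{p+1} e^{a√(T²−r²)} / √(T²−r²) dr = Σ_{k=0}^∞ (a^k/k!) · (T^{p+k+1}/2) · Γ(p/2+1) Γ((k+1)/2) / Γ((p+k+3)/2), the series on the right converging absolutely. -/

import Mathlib

open MeasureTheory Real Set



/-- Real Beta integral in terms of Gamma functions. -/
lemma real_beta_integral {s t : ℝ} (hs : 0 < s) (ht : 0 < t) :
    ∫ x in (0:ℝ)..1, x ^ (s - 1) * (1 - x) ^ (t - 1)
      = Real.Gamma s * Real.Gamma t / Real.Gamma (s + t) := by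
  have key : Complex.betaIntegral s t
      = ((∫ x in (0:ℝ)..1, x ^ (s - 1) * (1 - x) ^ (t - 1) : ℝ) : ℂ) := by
    rw [Complex.betaIntegral, ← intervalIntegral.integral_ofReal]
    apply intervalIntegral.integral_congr
    intro x hx
    rw [Set.uIcc_of_le (by norm_num : (0:ℝ) ≤ 1)] at hx
    obtain ⟨hx0, hx1⟩ := hx
    push_cast
    rw [Complex.ofReal_cpow hx0 (s-1), Complex.ofReal_cpow (by linarith : (0:ℝ) ≤ 1 - x) (t-1)]
    push_cast
    ring
  have h := Complex.Gamma_mul_Gamma_eq_betaIntegral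
    (s := (s:ℂ)) (t := (t:ℂ)) (by simpa using hs) (by simpa using ht)
  rw [key] at h
  have h2 : ((Real.Gamma s * Real.Gamma t : ℝ) : ℂ)
      = ((Real.Gamma (s + t) * ∫ x in (0:ℝ)..1, x ^ (s - 1) * (1 - x) ^ (t - 1) : ℝ) : ℂ) := by
    push_cast
    rw [show ((s:ℂ) + t) = ((s + t : ℝ) : ℂ) by push_cast; ring, Complex.Gamma_ofReal,
      Complex.Gamma_ofReal, Complex.Gamma_ofReal] at h
    exact_mod_cast h
  have h3 := Complex.ofReal_injective h2
  have hG : 0 < Real.Gamma (s + t) := Real.Gamma_pos_of_pos (by linarith)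
  field_simp
  linarith [h3]


lemma integrableOn_beta {s t : ℝ} (hs : 0 < s) (ht : 0 < t) :
    IntegrableOn (fun x : ℝ => x ^ (s - 1) * (1 - x) ^ (t - 1)) (Set.Ioo 0 1) := by
  have h := Complex.betaIntegral_convergent
    (u := (s:ℂ)) (v := (t:ℂ)) (by simpa using hs) (by simpa using ht)
  rw [intervalIntegrable_iff_integrableOn_Ioc_of_le (by norm_num : (0:ℝ) ≤ 1)] at h
  have h2 := (h.mono_set Set.Ioo_subset_Ioc_self).norm
  refine IntegrableOn.congr_fun h2 ?_ measurableSet_Ioo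
  intro x hx
  obtain ⟨hx0, hx1⟩ := hx
  have h1x : (0:ℝ) < 1 - x := by linarith
  have e1 : ((1:ℂ) - (x:ℝ)) = ((1 - x : ℝ) : ℂ) := by push_cast; ring
  simp only [norm_mul, e1]
  rw [Complex.norm_cpow_eq_rpow_re_of_pos hx0, Complex.norm_cpow_eq_rpow_re_of_pos h1x]
  simp


lemma subst_image (T : ℝ) (hT : 0 < T) :
    (fun x : ℝ => T * Real.sqrt x) '' Ioo 0 1 = Ioo 0 T := by
  ext u
  constructor
  · rintro ⟨x, ⟨hx0, hx1⟩, rfl⟩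
    have hsx : 0 < Real.sqrt x := Real.sqrt_pos.mpr hx0
    have hsx1 : Real.sqrt x < 1 := by
      have := Real.sqrt_lt_sqrt hx0.le hx1
      simpa using this
    constructor
    · positivity
    · show T * Real.sqrt x < T
      nlinarith
  · rintro ⟨hu0, huT⟩
    refine ⟨(u / T) ^ 2, ⟨by positivity, ?_⟩, ?_⟩
    · have h1 : u / T < 1 := (div_lt_one hT).mpr huT
      have h0 : 0 < u / T := by positivity
      nlinarith
    · show T * Real.sqrt ((u / T) ^ 2) = u
      rw [Real.sqrt_sq (by positivity)]
      field_simp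

lemma subst_deriv (T : ℝ) {x : ℝ} (hx : x ∈ Ioo (0:ℝ) 1) :
    HasDerivWithinAt (fun x : ℝ => T * Real.sqrt x) (T / (2 * Real.sqrt x)) (Ioo 0 1) x := by
  have h := (Real.hasDerivAt_sqrt (ne_of_gt hx.1)).const_mul T
  have : T * (1 / (2 * Real.sqrt x)) = T / (2 * Real.sqrt x) := by ring
  rw [this] at h
  exact h.hasDerivWithinAt

lemma subst_inj (T : ℝ) (hT : 0 < T) :
    InjOn (fun x : ℝ => T * Real.sqrt x) (Ioo 0 1) := by
  intro x hx y hy h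
  simp only [mul_right_inj' (ne_of_gt hT)] at h
  rw [← Real.sq_sqrt hx.1.le, ← Real.sq_sqrt hy.1.le, h]

lemma pointwise_calc (T p : ℝ) (hT : 0 < T) (k : ℕ) {x : ℝ} (hx : x ∈ Ioo (0:ℝ) 1) :
    |T / (2 * Real.sqrt x)| *
      ((T * Real.sqrt x) ^ (p + 1) *
        Real.sqrt (T ^ 2 - (T * Real.sqrt x) ^ 2) ^ k /
        Real.sqrt (T ^ 2 - (T * Real.sqrt x) ^ 2))
    = T ^ (p + (k : ℝ) + 1) / 2 * (x ^ (p / 2) * (1 - x) ^ (((k : ℝ) - 1) / 2)) := by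
  obtain ⟨hx0, hx1⟩ := hx
  have h1x : (0:ℝ) < 1 - x := by linarith
  have hsx : 0 < Real.sqrt x := Real.sqrt_pos.mpr hx0
  have hs1 : 0 < Real.sqrt (1 - x) := Real.sqrt_pos.mpr h1x
  have hz : Real.sqrt (T ^ 2 - (T * Real.sqrt x) ^ 2) = T * Real.sqrt (1 - x) := by
    rw [show T ^ 2 - (T * Real.sqrt x) ^ 2 = T ^ 2 * (1 - x) by
          rw [mul_pow, Real.sq_sqrt hx0.le]; ring,
        Real.sqrt_mul (sq_nonneg T), Real.sqrt_sq hT.le]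
  have hTs : 0 < T * Real.sqrt (1 - x) := by positivity
  have habs : |T / (2 * Real.sqrt x)| = T / (2 * Real.sqrt x) := abs_of_pos (by positivity)
  have hA : (T * Real.sqrt x) ^ (p + 1) = T ^ (p + 1) * x ^ ((p + 1) / 2) := by
    rw [Real.mul_rpow hT.le (Real.sqrt_nonneg x)]
    congr 1
    rw [Real.sqrt_eq_rpow, ← Real.rpow_mul hx0.le]
    ring_nf
  have hB : (T * Real.sqrt (1 - x)) ^ k / (T * Real.sqrt (1 - x))
      = T ^ ((k : ℝ) - 1) * (1 - x) ^ (((k : ℝ) - 1) / 2) := by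
    rw [← Real.rpow_natCast (T * Real.sqrt (1 - x)) k]
    nth_rewrite 2 [← Real.rpow_one (T * Real.sqrt (1 - x))]
    rw [← Real.rpow_sub hTs, Real.mul_rpow hT.le hs1.le]
    congr 1
    rw [Real.sqrt_eq_rpow, ← Real.rpow_mul h1x.le]
    ring_nf
  have hC : T / (2 * Real.sqrt x) = T * x ^ (-(1/2 : ℝ)) / 2 := by
    rw [show x ^ (-(1/2 : ℝ)) = (Real.sqrt x)⁻¹ by
          rw [Real.rpow_neg hx0.le, Real.sqrt_eq_rpow]]
    field_simp
  have hD : T ^ (p + (k : ℝ) + 1) = T ^ (p + 1) * T ^ ((k : ℝ) - 1) * T := by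
    rw [show p + (k : ℝ) + 1 = p + 1 + ((k : ℝ) - 1) + 1 by ring,
        Real.rpow_add hT, Real.rpow_add hT, Real.rpow_one]
  have hE : x ^ (p / 2) = x ^ ((p + 1) / 2) * x ^ (-(1/2 : ℝ)) := by
    rw [← Real.rpow_add hx0]
    ring_nf
  rw [habs, hz, mul_div_assoc, hB, hA, hC, hD, hE]
  ring


lemma integrableOn_beta' {u v : ℝ} (hu : -1 < u) (hv : -1 < v) :
    IntegrableOn (fun x : ℝ => x ^ u * (1 - x) ^ v) (Set.Ioo 0 1) := by
  have h := integrableOn_beta (s := u + 1) (t := v + 1) (by linarith) (by linarith)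
  simpa using h

lemma real_beta_Ioo {u v : ℝ} (hu : -1 < u) (hv : -1 < v) :
    ∫ x in Ioo (0:ℝ) 1, x ^ u * (1 - x) ^ v
      = Real.Gamma (u + 1) * Real.Gamma (v + 1) / Real.Gamma (u + v + 2) := by
  rw [← integral_Ioc_eq_integral_Ioo,
    ← intervalIntegral.integral_of_le (by norm_num : (0:ℝ) ≤ 1)]
  have h := real_beta_integral (s := u + 1) (t := v + 1) (by linarith) (by linarith)
  simp only [add_sub_cancel_right] at h
  rw [h, show u + 1 + (v + 1) = u + v + 2 by ring]

lemma term_value (T p : ℝ) (hT : 0 < T) (k : ℕ) :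
    ∫ r in Ioo (0:ℝ) T,
        r ^ (p + 1) * Real.sqrt (T ^ 2 - r ^ 2) ^ k / Real.sqrt (T ^ 2 - r ^ 2)
      = T ^ (p + (k : ℝ) + 1) / 2 *
          ∫ x in Ioo (0:ℝ) 1, x ^ (p / 2) * (1 - x) ^ (((k : ℝ) - 1) / 2) := by
  rw [← subst_image T hT,
    integral_image_eq_integral_abs_deriv_smul measurableSet_Ioo
      (fun x hx => subst_deriv T hx) (subst_inj T hT)]
  rw [setIntegral_congr_fun measurableSet_Ioo (g := fun x =>
      T ^ (p + (k : ℝ) + 1) / 2 * (x ^ (p / 2) * (1 - x) ^ (((k : ℝ) - 1) / 2)))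
      (fun x hx => by simpa [smul_eq_mul] using pointwise_calc T p hT k hx)]
  rw [MeasureTheory.integral_const_mul]

lemma term_integrable (T p : ℝ) (hT : 0 < T) (hp : 1 ≤ p) (k : ℕ) :
    IntegrableOn
      (fun r : ℝ => r ^ (p + 1) * Real.sqrt (T ^ 2 - r ^ 2) ^ k / Real.sqrt (T ^ 2 - r ^ 2))
      (Ioo 0 T) := by
  rw [← subst_image T hT,
    integrableOn_image_iff_integrableOn_abs_deriv_smul measurableSet_Ioo
      (fun x hx => subst_deriv T hx) (subst_inj T hT)]
  have base := (integrableOn_beta' (u := p / 2) (v := ((k : ℝ) - 1) / 2)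
      (by linarith) (by
        have : (0:ℝ) ≤ (k : ℝ) := Nat.cast_nonneg k
        linarith)).const_mul (T ^ (p + (k : ℝ) + 1) / 2)
  refine IntegrableOn.congr_fun base ?_ measurableSet_Ioo
  intro x hx
  simp only [smul_eq_mul]
  exact (pointwise_calc T p hT k hx).symm

theorem moment_integral_series (a T p : ℝ) (ha : 0 < a) (hT : 0 < T) (hp : 1 ≤ p) :
    (∫ r in (0:ℝ)..T,
        r ^ (p + 1) * Real.exp (a * Real.sqrt (T ^ 2 - r ^ 2)) /
          Real.sqrt (T ^ 2 - r ^ 2)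
      = ∑' k : ℕ, a ^ k / (Nat.factorial k) *
          (T ^ (p + (k : ℝ) + 1) / 2) *
          (Real.Gamma (p / 2 + 1) * Real.Gamma (((k : ℝ) + 1) / 2) /
            Real.Gamma ((p + (k : ℝ) + 3) / 2))) ∧
    Summable (fun k : ℕ => a ^ k / (Nat.factorial k) *
          (T ^ (p + (k : ℝ) + 1) / 2) *
          (Real.Gamma (p / 2 + 1) * Real.Gamma (((k : ℝ) + 1) / 2) /
            Real.Gamma ((p + (k : ℝ) + 3) / 2))) := by
  -- the summands of the expansion
  set F : ℕ → ℝ → ℝ := fun k r => a ^ k / (Nat.factorial k) *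
    (r ^ (p + 1) * Real.sqrt (T ^ 2 - r ^ 2) ^ k / Real.sqrt (T ^ 2 - r ^ 2)) with hFdef
  -- beta integrals
  set B : ℕ → ℝ := fun k => ∫ x in Ioo (0:ℝ) 1, x ^ (p / 2) * (1 - x) ^ (((k : ℝ) - 1) / 2)
    with hBdef
  have hBk_eq : ∀ k : ℕ, B k = Real.Gamma (p / 2 + 1) * Real.Gamma (((k : ℝ) + 1) / 2) /
      Real.Gamma ((p + (k : ℝ) + 3) / 2) := by
    intro k
    have hk0 : (0:ℝ) ≤ (k : ℝ) := Nat.cast_nonneg k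
    simp only [hBdef]
    rw [real_beta_Ioo (by linarith) (by linarith)]
    rw [show ((k : ℝ) - 1) / 2 + 1 = ((k : ℝ) + 1) / 2 by ring,
      show p / 2 + ((k : ℝ) - 1) / 2 + 2 = (p + (k : ℝ) + 3) / 2 by ring]
  -- integrability of each term
  have hint : ∀ k : ℕ, IntegrableOn (F k) (Ioo 0 T) := by
    intro k
    exact (term_integrable T p hT hp k).const_mul _
  -- value of each term integral
  have hval : ∀ k : ℕ, ∫ r in Ioo (0:ℝ) T, F k r
      = a ^ k / (Nat.factorial k) * (T ^ (p + (k : ℝ) + 1) / 2) * B k := by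
    intro k
    rw [hFdef]
    simp only []
    rw [MeasureTheory.integral_const_mul, term_value T p hT k, hBdef]
    ring
  -- nonnegativity on the domain
  have hnn : ∀ k : ℕ, ∀ r ∈ Ioo (0:ℝ) T, 0 ≤ F k r := by
    intro k r hr
    have h1 : (0:ℝ) ≤ r ^ (p + 1) := Real.rpow_nonneg hr.1.le _
    have h2 : (0:ℝ) ≤ Real.sqrt (T ^ 2 - r ^ 2) := Real.sqrt_nonneg _
    have h3 : (0:ℝ) ≤ a ^ k / (Nat.factorial k) := by positivity
    exact mul_nonneg h3 (div_nonneg (mul_nonneg h1 (pow_nonneg h2 k)) h2)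
  -- bound on the beta integrals
  have hBnn : ∀ k : ℕ, 0 ≤ B k := by
    intro k
    refine setIntegral_nonneg measurableSet_Ioo (fun x hx => ?_)
    exact mul_nonneg (Real.rpow_nonneg hx.1.le _) (Real.rpow_nonneg (by linarith [hx.2]) _)
  have hBc_int : IntegrableOn (fun x : ℝ => (1 - x) ^ (-(1/2 : ℝ))) (Ioo 0 1) := by
    have h := integrableOn_beta' (u := (0:ℝ)) (v := -(1/2 : ℝ)) (by norm_num) (by norm_num)
    refine IntegrableOn.congr_fun h ?_ measurableSet_Ioo
    intro x hx
    simp [Real.rpow_zero]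
  set Bc : ℝ := ∫ x in Ioo (0:ℝ) 1, (1 - x) ^ (-(1/2 : ℝ)) with hBcdef
  have hBle : ∀ k : ℕ, B k ≤ Bc := by
    intro k
    have hk0 : (0:ℝ) ≤ (k : ℝ) := Nat.cast_nonneg k
    refine setIntegral_mono_on
      (integrableOn_beta' (by linarith) (by linarith)) hBc_int measurableSet_Ioo ?_
    intro x hx
    obtain ⟨hx0, hx1⟩ := hx
    have h1x : (0:ℝ) < 1 - x := by linarith
    have e1 : x ^ (p / 2) ≤ 1 := Real.rpow_le_one hx0.le hx1.le (by linarith)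
    have e2 : (1 - x) ^ (((k : ℝ) - 1) / 2) ≤ (1 - x) ^ (-(1/2 : ℝ)) :=
      Real.rpow_le_rpow_of_exponent_ge h1x (by linarith) (by linarith)
    calc x ^ (p / 2) * (1 - x) ^ (((k : ℝ) - 1) / 2)
        ≤ 1 * (1 - x) ^ (-(1/2 : ℝ)) :=
          mul_le_mul e1 e2 (Real.rpow_nonneg h1x.le _) (by norm_num)
      _ = (1 - x) ^ (-(1/2 : ℝ)) := one_mul _
  -- summability of the term integrals
  have hsum : Summable (fun k : ℕ =>
      a ^ k / (Nat.factorial k) * (T ^ (p + (k : ℝ) + 1) / 2) * B k) := by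
    refine Summable.of_nonneg_of_le (fun k => ?_) (fun k => ?_)
      ((Real.summable_pow_div_factorial (a * T)).mul_left (T ^ (p + 1) / 2 * Bc))
    · have h3 : (0:ℝ) ≤ a ^ k / (Nat.factorial k) := by positivity
      exact mul_nonneg (mul_nonneg h3 (by positivity)) (hBnn k)
    · have hT1 : T ^ (p + (k : ℝ) + 1) = T ^ (p + 1) * T ^ k := by
        rw [show p + (k : ℝ) + 1 = (p + 1) + (k : ℝ) by ring, Real.rpow_add hT,
          Real.rpow_natCast]
      have h3 : (0:ℝ) ≤ a ^ k / (Nat.factorial k) := by positivity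
      calc a ^ k / (Nat.factorial k) * (T ^ (p + (k : ℝ) + 1) / 2) * B k
          ≤ a ^ k / (Nat.factorial k) * (T ^ (p + (k : ℝ) + 1) / 2) * Bc := by
            refine mul_le_mul_of_nonneg_left (hBle k) ?_
            exact mul_nonneg h3 (by positivity)
        _ = T ^ (p + 1) / 2 * Bc * ((a * T) ^ k / (Nat.factorial k)) := by
            rw [hT1, mul_pow]; ring
  have hsum' : Summable (fun k : ℕ => ∫ r in Ioo (0:ℝ) T, F k r) := by
    simpa only [hval] using hsum
  -- norms
  have hnorm : ∀ k : ℕ, ∫ r in Ioo (0:ℝ) T, ‖F k r‖ = ∫ r in Ioo (0:ℝ) T, F k r := by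
    intro k
    refine setIntegral_congr_fun measurableSet_Ioo (fun r hr => ?_)
    exact Real.norm_of_nonneg (hnn k r hr)
  -- pointwise series expansion
  have hpt : ∀ r ∈ Ioo (0:ℝ) T,
      r ^ (p + 1) * Real.exp (a * Real.sqrt (T ^ 2 - r ^ 2)) / Real.sqrt (T ^ 2 - r ^ 2)
        = ∑' k : ℕ, F k r := by
    intro r hr
    have hz : 0 < Real.sqrt (T ^ 2 - r ^ 2) :=
      Real.sqrt_pos.mpr (by nlinarith [hr.1, hr.2])
    set z := Real.sqrt (T ^ 2 - r ^ 2) with hzdef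
    have hexp : Real.exp (a * z) = ∑' k : ℕ, (a * z) ^ k / (Nat.factorial k) := by
      rw [Real.exp_eq_exp_ℝ, NormedSpace.exp_eq_tsum_div]
    rw [hexp, mul_comm (r ^ (p+1)), mul_div_assoc, ← tsum_mul_right]
    refine tsum_congr (fun k => ?_)
    rw [hFdef]
    simp only []
    rw [mul_pow, ← hzdef]
    field_simp
  -- main computation
  have hmain : ∫ r in (0:ℝ)..T,
      r ^ (p + 1) * Real.exp (a * Real.sqrt (T ^ 2 - r ^ 2)) / Real.sqrt (T ^ 2 - r ^ 2)
      = ∑' k : ℕ, a ^ k / (Nat.factorial k) * (T ^ (p + (k : ℝ) + 1) / 2) * B k := by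
    rw [intervalIntegral.integral_of_le hT.le, integral_Ioc_eq_integral_Ioo]
    rw [setIntegral_congr_fun measurableSet_Ioo (g := fun r => ∑' k : ℕ, F k r) hpt]
    rw [← MeasureTheory.integral_tsum_of_summable_integral_norm hint
      (by simpa only [hnorm] using hsum')]
    exact tsum_congr hval
  constructor
  · rw [hmain]
    refine tsum_congr (fun k => ?_)
    rw [hBk_eq k]
  · have : (fun k : ℕ => a ^ k / (Nat.factorial k) * (T ^ (p + (k : ℝ) + 1) / 2) *
        (Real.Gamma (p / 2 + 1) * Real.Gamma (((k : ℝ) + 1) / 2) /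
          Real.Gamma ((p + (k : ℝ) + 3) / 2)))
        = fun k : ℕ => a ^ k / (Nat.factorial k) * (T ^ (p + (k : ℝ) + 1) / 2) * B k := by
      funext k; rw [hBk_eq k]
    rw [this]
    exact hsum
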